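/- Let p be a prime, let F be the algebraic closure of the field with p elements, let G = SL₂(F), and let B ≤ G be the Borel subgroup of upper triangular matrices in G (those g with lower-left entry g₂₁ = 0). Let k be a field and let V = (G/B) →₀ k be the k-vector space with basis the left coset space G/B, on which G acts by left translation of the basis vectors. Then the subspace of vectors v ∈ V satisfying b • v = v for all b ∈ B is one-dimensional; it is spanned by the basis vector corresponding to the trivial coset B. -/

import Mathlib

open Matrix

/-- The Borel subgroup of upper triangular matrices in `SL₂(R)`. -/
def upperBorel (R : Type*) [CommRing R] : Subgroup (SpecialLinearGroup (Fin 2) R) where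
  carrier := {g | (g : Matrix (Fin 2) (Fin 2) R) 1 0 = 0}
  one_mem' := by simp
  mul_mem' := by
    intro a b ha hb
    have ha' : (a : Matrix (Fin 2) (Fin 2) R) 1 0 = 0 := ha
    have hb' : (b : Matrix (Fin 2) (Fin 2) R) 1 0 = 0 := hb
    show ((a : Matrix (Fin 2) (Fin 2) R) * (b : Matrix (Fin 2) (Fin 2) R)) 1 0 = 0
    rw [Matrix.mul_apply, Fin.sum_univ_two, ha', hb']; ring
  inv_mem' := by
    intro a ha
    have ha' : (a : Matrix (Fin 2) (Fin 2) R) 1 0 = 0 := ha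
    show (Matrix.adjugate (a : Matrix (Fin 2) (Fin 2) R)) 1 0 = 0
    rw [Matrix.adjugate_fin_two]
    simp [ha']

/-- The unipotent upper-triangular matrix `!![1, t; 0, 1]` in `SL₂`. -/
def uu {R : Type*} [CommRing R] (t : R) : SpecialLinearGroup (Fin 2) R :=
  ⟨!![1, t; 0, 1], by simp [Matrix.det_fin_two_of]⟩

lemma uu_mem {R : Type*} [CommRing R] (t : R) : uu t ∈ upperBorel R := by
  show ((uu t : SpecialLinearGroup (Fin 2) R) : Matrix (Fin 2) (Fin 2) R) 1 0 = 0
  simp [uu]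

lemma uu_mul {R : Type*} [CommRing R] (t s : R) : uu t * uu s = uu (t + s) := by
  ext i j
  show ((uu t : Matrix (Fin 2) (Fin 2) R) * (uu s : Matrix (Fin 2) (Fin 2) R)) i j =
    (uu (t + s) : Matrix (Fin 2) (Fin 2) R) i j
  simp [uu, SpecialLinearGroup.coe_mul, mul_apply, Fin.sum_univ_two]
  fin_cases i <;> fin_cases j <;> simp <;> ring

lemma uu_inv {R : Type*} [CommRing R] (t : R) : (uu t)⁻¹ = uu (-t) := by
  rw [inv_eq_iff_mul_eq_one, uu_mul]
  ext i j
  simp [uu]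
  fin_cases i <;> fin_cases j <;> simp [Matrix.one_apply]

lemma conj_entry {R : Type*} [CommRing R] (r : R) (g : SpecialLinearGroup (Fin 2) R) :
    ((g⁻¹ * uu r * g : SpecialLinearGroup (Fin 2) R) : Matrix (Fin 2) (Fin 2) R) 1 0
      = -(r * (g 1 0)^2) := by
  show (Matrix.adjugate (g : Matrix (Fin 2) (Fin 2) R) * (uu r : Matrix (Fin 2) (Fin 2) R) *
    (g : Matrix (Fin 2) (Fin 2) R)) 1 0 = _
  simp [uu, SpecialLinearGroup.coe_mul, SpecialLinearGroup.coe_inv, adjugate_fin_two,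
    mul_apply, Fin.sum_univ_two]
  ring

set_option maxHeartbeats 2000000 in
/-- Remark 3.2 computation: for `G = SL₂(𝔽̄_p)`, `B` the upper-triangular Borel,
and `V = k[G/B]` (finitely supported functions, with `G` acting by left
translation of basis vectors), the `B`-fixed vectors form the one-dimensional
span of the basis vector at the trivial coset. -/
theorem stmt_8 (p : ℕ) [Fact p.Prime] (k : Type*) [Field k] :
    letI F := AlgebraicClosure (ZMod p)
    letI G := SpecialLinearGroup (Fin 2) F
    letI B := upperBorel F
    {v : (G ⧸ B) →₀ k | ∀ b ∈ B, Finsupp.mapDomain (fun x : G ⧸ B => b • x) v = v} =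
      (Submodule.span k {Finsupp.single ((1 : G) : G ⧸ B) (1 : k)} : Set ((G ⧸ B) →₀ k)) ∧
    Module.rank k
      (Submodule.span k {Finsupp.single ((1 : G) : G ⧸ B) (1 : k)}) = 1 := by
  set F := AlgebraicClosure (ZMod p)
  set G := SpecialLinearGroup (Fin 2) F
  set B := upperBorel F
  have hsingle_ne : (Finsupp.single ((1 : G) : G ⧸ B) (1 : k)) ≠ 0 :=
    fun h => one_ne_zero (Finsupp.single_eq_zero.mp h)
  constructor
  · ext v
    simp only [Set.mem_setOf_eq, SetLike.mem_coe, Submodule.mem_span_singleton]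
    constructor
    · intro hv
      -- v is constant on B-orbits
      have hconst : ∀ b ∈ B, ∀ x : G ⧸ B, v (b • x) = v x := by
        intro b hb x
        conv_lhs => rw [← hv b hb]
        exact Finsupp.mapDomain_apply (MulAction.injective b) v x
      -- v vanishes away from the trivial coset
      have hzero : ∀ x : G ⧸ B, x ≠ ((1 : G) : G ⧸ B) → v x = 0 := by
        intro x hx
        by_contra hvx
        obtain ⟨g, rfl⟩ := QuotientGroup.mk_surjective x
        have hg : (g : Matrix (Fin 2) (Fin 2) F) 1 0 ≠ 0 := by
          intro h
          apply hx
          rw [QuotientGroup.eq, mul_one]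
          exact B.inv_mem (show g ∈ B from h)
        -- the map t ↦ uu t • ↑g is injective
        have hinj : Function.Injective (fun t : F => (uu t : G) • ((g : G) : G ⧸ B)) := by
          intro t s hts
          simp only [MulAction.Quotient.smul_coe, smul_eq_mul, QuotientGroup.eq] at hts
          have : ((uu t * g)⁻¹ * (uu s * g) :
              G) = g⁻¹ * uu (s - t) * g := by
            rw [_root_.mul_inv_rev, uu_inv, mul_assoc, ← mul_assoc (uu (-t)), uu_mul,
              neg_add_eq_sub, ← mul_assoc]
          rw [this] at hts
          have h10 : ((g⁻¹ * uu (s - t) * g : G) : Matrix (Fin 2) (Fin 2) F) 1 0 = 0 := hts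
          rw [conj_entry (s - t) g] at h10
          have : (s - t) * ((g : Matrix (Fin 2) (Fin 2) F) 1 0)^2 = 0 := by
            rw [← neg_eq_zero]; exact h10
          rcases mul_eq_zero.mp this with h | h
          · exact (sub_eq_zero.mp h).symm
          · exact absurd (pow_eq_zero_iff (by norm_num) |>.mp h) hg
        have hmem : ∀ t : F, (uu t : G) • ((g : G) : G ⧸ B) ∈ v.support := by
          intro t
          rw [Finsupp.mem_support_iff, hconst (uu t) (uu_mem t)]
          exact hvx
        have : (Set.range (fun t : F => (uu t : G) • ((g : G) : G ⧸ B))).Infinite :=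
          Set.infinite_range_of_injective hinj
        exact this ((v.support.finite_toSet).subset (by rintro _ ⟨t, rfl⟩; exact hmem t))
      refine ⟨v ((1 : G) : G ⧸ B), ?_⟩
      ext x
      by_cases hx : x = ((1 : G) : G ⧸ B)
      · subst hx; simp
      · simp [Finsupp.single_apply, Ne.symm hx, hzero x hx]
    · rintro ⟨c, rfl⟩ b hb
      rw [Finsupp.mapDomain_smul, Finsupp.mapDomain_single]
      congr 2
      show b • ((1 : G) : G ⧸ B) = _
      rw [MulAction.Quotient.smul_coe, smul_eq_mul, mul_one, QuotientGroup.eq, mul_one]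
      exact B.inv_mem hb
  · rw [rank_span_set ((linearIndepOn_singleton_iff k (v := id)
      (i := Finsupp.single ((1 : G) : G ⧸ B) (1 : k))).mpr hsingle_ne), Cardinal.mk_singleton]
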